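/- Let φ, φ̃ : M → N be two polyharmonic maps of even order k = 2s ≥ 4 with corresponding local variables u_ℓ, v_ℓ and ũ_ℓ, ṽ_ℓ, and local right-hand sides F^k and F̃^k. Then on any open set D whose closure is compact and contained in the chart domain, there exists a constant C > 0 such that |(F^k)^α − (F̃^k)^α| ≤ C( |φ − φ̃| + |dφ − dφ̃| + Σ_{ℓ=0}^{k−2} |u_ℓ − ũ_ℓ| + Σ_{ℓ=0}^{k−3} |v_ℓ − ṽ_ℓ| + |∇u_{k−2} − ∇ũ_{k−2}| ). -/

import Mathlib

noncomputable section

open scoped BigOperators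

namespace Polyharm

/-- Partial derivative of a scalar function on `ℝ^d` in the `i`-th coordinate direction. -/
def pd {d : ℕ} (i : Fin d) (f : (Fin d → ℝ) → ℝ) (x : Fin d → ℝ) : ℝ :=
  fderiv ℝ f x (Pi.single i 1)

/-- Euclidean norm of a finite family of real numbers. -/
def vnorm {ι : Type} [Fintype ι] (f : ι → ℝ) : ℝ :=
  Real.sqrt (∑ i, f i ^ 2)

/-- Local-coordinate data for maps between Riemannian manifolds: the inverse metric
`g^{ij}` and the Christoffel symbols `Γ^k_{ij}` of a chart of the domain `(M,g)`, and
the Christoffel symbols `Γ^α_{βγ}` of a chart of the target `(N,h)`. -/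
structure ChartData (m n : ℕ) where
  ginv : (Fin m → ℝ) → Fin m → Fin m → ℝ
  ΓM : (Fin m → ℝ) → Fin m → Fin m → Fin m → ℝ
  ΓN : (Fin n → ℝ) → Fin n → Fin n → Fin n → ℝ

variable {m n : ℕ}

/-- Smoothness of the domain data. -/
def ChartData.SmoothDomain (P : ChartData m n) : Prop :=
  (∀ i j, ContDiff ℝ (⊤ : ℕ∞) fun x => P.ginv x i j) ∧
  (∀ k i j, ContDiff ℝ (⊤ : ℕ∞) fun x => P.ΓM x k i j)

/-- Smoothness of the target Christoffel symbols. -/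
def ChartData.SmoothTarget (P : ChartData m n) : Prop :=
  ∀ α β γ, ContDiff ℝ (⊤ : ℕ∞) fun y => P.ΓN y α β γ

/-- The chart data comes from Riemannian metrics: `g^{ij}` is symmetric and positive
definite, and the Christoffel symbols are symmetric in their lower indices. -/
def ChartData.Riemannian (P : ChartData m n) : Prop :=
  (∀ x i j, P.ginv x i j = P.ginv x j i) ∧
  (∀ x (v : Fin m → ℝ), v ≠ 0 → 0 < ∑ i, ∑ j, P.ginv x i j * v i * v j) ∧
  (∀ x k i j, P.ΓM x k i j = P.ΓM x k j i) ∧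
  (∀ y α β γ, P.ΓN y α β γ = P.ΓN y α γ β)

/-- The Laplace–Beltrami operator on scalar functions:
`-Δ f = g^{ij} ∂²f/∂x^i∂x^j - g^{ij} Γ^k_{ij} ∂f/∂x^k`. -/
def lap (P : ChartData m n) (f : (Fin m → ℝ) → ℝ) (x : Fin m → ℝ) : ℝ :=
  -((∑ i, ∑ j, P.ginv x i j * pd i (fun z => pd j f z) x)
    - ∑ i, ∑ j, ∑ k, P.ginv x i j * P.ΓM x k i j * pd k f x)

/-- `φ_i^β = ∂φ^β/∂x^i`. -/
def dphi (φ : (Fin m → ℝ) → Fin n → ℝ) (x : Fin m → ℝ) (i : Fin m) (β : Fin n) : ℝ :=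
  pd i (fun z => φ z β) x

/-- `⟨dφ^β, dψ^γ⟩ = g^{ij} φ_i^β ψ_j^γ`. -/
def dpair (P : ChartData m n) (φ ψ : (Fin m → ℝ) → Fin n → ℝ) (x : Fin m → ℝ)
    (β γ : Fin n) : ℝ :=
  ∑ i, ∑ j, P.ginv x i j * dphi φ x i β * dphi ψ x j γ

/-- Components `R^α_{δβγ}` of the curvature tensor of the target, with the sign
convention `R(∂/∂y^β, ∂/∂y^γ)∂/∂y^δ = R^α_{δβγ} ∂/∂y^α` of the paper. -/
def Rc (P : ChartData m n) (y : Fin n → ℝ) (α δ β γ : Fin n) : ℝ :=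
  pd β (fun z => P.ΓN z α γ δ) y - pd γ (fun z => P.ΓN z α β δ) y
    + ∑ μ, (P.ΓN y α β μ * P.ΓN y μ γ δ - P.ΓN y α γ μ * P.ΓN y μ β δ)

/-- `2S^α_{βωϑ} = ∂Γ^α_{βϑ}/∂y^ω + Γ^γ_{βϑ}Γ^α_{ωγ} + ∂Γ^α_{ωϑ}/∂y^β + Γ^γ_{ωϑ}Γ^α_{βγ}`. -/
def Scoef (P : ChartData m n) (y : Fin n → ℝ) (α β ω ϑ : Fin n) : ℝ :=
  (pd ω (fun z => P.ΓN z α β ϑ) y + (∑ γ, P.ΓN y γ β ϑ * P.ΓN y α ω γ)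
    + pd β (fun z => P.ΓN z α ω ϑ) y + ∑ γ, P.ΓN y γ ω ϑ * P.ΓN y α β γ) / 2

/-- The operator
`A^α(η,ξ) = ξ_i^ϑ(-2 g^{ij} φ_j^β Γ^α_{βϑ}) + η^ϑ((Δφ^β)Γ^α_{βϑ} - g^{ij} φ_j^β φ_i^ω S^α_{βωϑ})`. -/
def Aop (P : ChartData m n) (φ : (Fin m → ℝ) → Fin n → ℝ) (η : Fin n → ℝ)
    (ξ : Fin m → Fin n → ℝ) (x : Fin m → ℝ) (α : Fin n) : ℝ :=
  (∑ ϑ, ∑ i, ξ i ϑ * (-2 * ∑ j, ∑ β, P.ginv x i j * dphi φ x j β * P.ΓN (φ x) α β ϑ))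
    + ∑ ϑ, η ϑ * ((∑ β, lap P (fun z => φ z β) x * P.ΓN (φ x) α β ϑ)
        - ∑ i, ∑ j, ∑ β, ∑ ω,
            P.ginv x i j * dphi φ x j β * dphi φ x i ω * Scoef P (φ x) α β ω ϑ)

/-- The operator `A` applied to (the components of) a section `σ` of `φ⁻¹TN`:
`A(σ, ∂σ)`. -/
def Asec (P : ChartData m n) (φ σ : (Fin m → ℝ) → Fin n → ℝ) (x : Fin m → ℝ)
    (α : Fin n) : ℝ :=
  Aop P φ (σ x) (fun i ϑ => pd i (fun z => σ z ϑ) x) x α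

/-- Components of the tension field `τ^α(φ) = -Δφ^α + g^{ij} Γ^α_{ϑβ} φ_i^ϑ φ_j^β`. -/
def tension (P : ChartData m n) (φ : (Fin m → ℝ) → Fin n → ℝ) (x : Fin m → ℝ)
    (α : Fin n) : ℝ :=
  -(lap P (fun z => φ z α) x)
    + ∑ i, ∑ j, ∑ ϑ, ∑ β,
        P.ginv x i j * P.ΓN (φ x) α ϑ β * dphi φ x i ϑ * dphi φ x j β

/-- The components `u_j` of `Δ̄^j τ(φ)`: `u_0 = τ(φ)` and
`u_{j+1} = Δ u_j + A(u_j, ∂u_j)` (local expression of the rough Laplacian). -/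
def uvar (P : ChartData m n) (φ : (Fin m → ℝ) → Fin n → ℝ) :
    ℕ → (Fin m → ℝ) → Fin n → ℝ
  | 0 => tension P φ
  | j+1 => fun x α => lap P (fun z => uvar P φ j z α) x + Asec P φ (uvar P φ j) x α

/-- `v_j = du_j`, i.e. `v_{j i}^α = ∂u_j^α/∂x^i`. -/
def vvar (P : ChartData m n) (φ : (Fin m → ℝ) → Fin n → ℝ) (j : ℕ) (x : Fin m → ℝ)
    (i : Fin m) (α : Fin n) : ℝ :=
  pd i (fun z => uvar P φ j z α) x

/-- Components of the pull-back covariant derivative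
`(∇̄_{∂_i} σ)^γ = ∂σ^γ/∂x^i + Γ^γ_{βδ}(φ) φ_i^β σ^δ`. -/
def covD (P : ChartData m n) (φ σ : (Fin m → ℝ) → Fin n → ℝ) (i : Fin m)
    (x : Fin m → ℝ) (γ : Fin n) : ℝ :=
  pd i (fun z => σ z γ) x + ∑ β, ∑ δ, P.ΓN (φ x) γ β δ * dphi φ x i β * σ x δ

/-- `(Tr_g R^N(X, dφ(·))dφ(·))^α`. -/
def trRphi (P : ChartData m n) (φ X : (Fin m → ℝ) → Fin n → ℝ) (x : Fin m → ℝ)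
    (α : Fin n) : ℝ :=
  ∑ i, ∑ j, ∑ β, ∑ γ, ∑ δ,
    P.ginv x i j * Rc P (φ x) α δ β γ * X x β * dphi φ x i γ * dphi φ x j δ

/-- `(Tr_g R^N(dφ(·), X)dφ(·))^α`. -/
def trRphi2 (P : ChartData m n) (φ X : (Fin m → ℝ) → Fin n → ℝ) (x : Fin m → ℝ)
    (α : Fin n) : ℝ :=
  ∑ i, ∑ j, ∑ β, ∑ γ, ∑ δ,
    P.ginv x i j * Rc P (φ x) α δ β γ * dphi φ x i β * X x γ * dphi φ x j δ

/-- `(Tr_g R^N(∇̄_{(·)}W, Z)dφ(·))^α`. -/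
def trRD (P : ChartData m n) (φ W Z : (Fin m → ℝ) → Fin n → ℝ) (x : Fin m → ℝ)
    (α : Fin n) : ℝ :=
  ∑ i, ∑ j, ∑ β, ∑ γ, ∑ δ,
    P.ginv x i j * Rc P (φ x) α δ β γ * covD P φ W i x β * Z x γ * dphi φ x j δ

/-- `(Tr_g R^N(W, ∇̄_{(·)}Z)dφ(·))^α`. -/
def trRD2 (P : ChartData m n) (φ W Z : (Fin m → ℝ) → Fin n → ℝ) (x : Fin m → ℝ)
    (α : Fin n) : ℝ :=
  ∑ i, ∑ j, ∑ β, ∑ γ, ∑ δ,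
    P.ginv x i j * Rc P (φ x) α δ β γ * W x β * covD P φ Z i x γ * dphi φ x j δ

/-- Local components of Maeta's `k`-tension field `τ_k(φ)`, for `k = 2s`:
`τ_{2s}(φ) = Δ̄^{2s-1}τ(φ) - R^N(Δ̄^{2s-2}τ(φ), dφ(e_j))dφ(e_j)
  - Σ_{ℓ=1}^{s-1}( R^N(∇̄_{e_j}Δ̄^{s+ℓ-2}τ(φ), Δ̄^{s-ℓ-1}τ(φ))dφ(e_j)
                 - R^N(Δ̄^{s+ℓ-2}τ(φ), ∇̄_{e_j}Δ̄^{s-ℓ-1}τ(φ))dφ(e_j) )`,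
and for `k = 2s+1`:
`τ_{2s+1}(φ) = Δ̄^{2s}τ(φ) - R^N(Δ̄^{2s-1}τ(φ), dφ(e_j))dφ(e_j)
  - Σ_{ℓ=1}^{s-1}( R^N(∇̄_{e_j}Δ̄^{s+ℓ-1}τ(φ), Δ̄^{s-ℓ-1}τ(φ))dφ(e_j)
                 - R^N(Δ̄^{s+ℓ-1}τ(φ), ∇̄_{e_j}Δ̄^{s-ℓ-1}τ(φ))dφ(e_j) )
  - R^N(∇̄_{e_j}Δ̄^{s-1}τ(φ), Δ̄^{s-1}τ(φ))dφ(e_j)`. -/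
def tauK (P : ChartData m n) (φ : (Fin m → ℝ) → Fin n → ℝ) (k : ℕ) (x : Fin m → ℝ)
    (α : Fin n) : ℝ :=
  if Even k then
    uvar P φ (k-1) x α - trRphi P φ (uvar P φ (k-2)) x α
      - ∑ ℓ ∈ Finset.Icc 1 (k/2 - 1),
          (trRD P φ (uvar P φ (k/2 + ℓ - 2)) (uvar P φ (k/2 - ℓ - 1)) x α
            - trRD2 P φ (uvar P φ (k/2 + ℓ - 2)) (uvar P φ (k/2 - ℓ - 1)) x α)
  else
    uvar P φ (k-1) x α - trRphi P φ (uvar P φ (k-2)) x α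
      - (∑ ℓ ∈ Finset.Icc 1 (k/2 - 1),
          (trRD P φ (uvar P φ (k/2 + ℓ - 1)) (uvar P φ (k/2 - ℓ - 1)) x α
            - trRD2 P φ (uvar P φ (k/2 + ℓ - 1)) (uvar P φ (k/2 - ℓ - 1)) x α))
      - trRD P φ (uvar P φ (k/2 - 1)) (uvar P φ (k/2 - 1)) x α

/-- Components `(∇dφ)(∂_i,∂_j)^α` of the second fundamental form of `φ`. -/
def sff (P : ChartData m n) (φ : (Fin m → ℝ) → Fin n → ℝ) (x : Fin m → ℝ)
    (i j : Fin m) (α : Fin n) : ℝ :=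
  pd i (fun z => dphi φ z j α) x - (∑ k, P.ΓM x k i j * dphi φ x k α)
    + ∑ β, ∑ γ, P.ΓN (φ x) α β γ * dphi φ x i β * dphi φ x j γ

/-- `E^α_{βδϑη} = R^α_{βγδ}Γ^γ_{ϑη} + R^α_{βγϑ}Γ^γ_{δη}`. -/
def Ecoef (P : ChartData m n) (y : Fin n → ℝ) (α β δ ϑ η : Fin n) : ℝ :=
  ∑ γ, (Rc P y α β γ δ * P.ΓN y γ ϑ η + Rc P y α β γ ϑ * P.ΓN y γ δ η)

/-- `⟨v^γ, dφ^β⟩ = g^{ij} v_i^γ φ_j^β`. -/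
def vpair (P : ChartData m n) (φ : (Fin m → ℝ) → Fin n → ℝ) (v : Fin m → Fin n → ℝ)
    (x : Fin m → ℝ) (γ β : Fin n) : ℝ :=
  ∑ i, ∑ j, P.ginv x i j * v i γ * dphi φ x j β

/-- The explicit local right-hand side `F^k` of the polyharmonic map equation
`Δu_{k-2}^α = (F^k)^α` for even order `k = 2s ≥ 4`:
`(F^k)^α = -A_{k-1}^α - u_{k-2}^δ⟨dφ^γ,dφ^β⟩R^α_{βγδ}
 + Σ_{ℓ=1}^{k/2-1}( u^δ_{k/2-ℓ-1}⟨v^γ_{k/2+ℓ-2},dφ^β⟩R^α_{βγδ}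
   + u^ϑ_{k/2+ℓ-2}u^δ_{k/2-ℓ-1}⟨dφ^η,dφ^β⟩E^α_{βδϑη}
   + u^δ_{k/2+ℓ-2}⟨v^γ_{k/2-ℓ-1},dφ^β⟩R^α_{βγδ} )`. -/
def FkEven (P : ChartData m n) (φ : (Fin m → ℝ) → Fin n → ℝ) (k : ℕ) (x : Fin m → ℝ)
    (α : Fin n) : ℝ :=
  -Asec P φ (uvar P φ (k-2)) x α
    - (∑ δ, ∑ γ, ∑ β, uvar P φ (k-2) x δ * dpair P φ φ x γ β * Rc P (φ x) α β γ δ)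
    + ∑ ℓ ∈ Finset.Icc 1 (k/2 - 1),
        ((∑ δ, ∑ γ, ∑ β, uvar P φ (k/2 - ℓ - 1) x δ *
            vpair P φ (vvar P φ (k/2 + ℓ - 2) x) x γ β * Rc P (φ x) α β γ δ)
          + (∑ ϑ, ∑ δ, ∑ η, ∑ β, uvar P φ (k/2 + ℓ - 2) x ϑ * uvar P φ (k/2 - ℓ - 1) x δ *
              dpair P φ φ x η β * Ecoef P (φ x) α β δ ϑ η)
          + ∑ δ, ∑ γ, ∑ β, uvar P φ (k/2 + ℓ - 2) x δ *
              vpair P φ (vvar P φ (k/2 - ℓ - 1) x) x γ β * Rc P (φ x) α β γ δ)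

section Aux

variable {m n : ℕ}

lemma contDiff_pd {d : ℕ} {i : Fin d} {f : (Fin d → ℝ) → ℝ}
    (hf : ContDiff ℝ (⊤ : ℕ∞) f) : ContDiff ℝ (⊤ : ℕ∞) (pd i f) :=
  (hf.fderiv_right (by simp)).clm_apply contDiff_const

lemma vnorm_nonneg {ι : Type} [Fintype ι] (f : ι → ℝ) : 0 ≤ vnorm f :=
  Real.sqrt_nonneg _

lemma abs_le_vnorm {ι : Type} [Fintype ι] (f : ι → ℝ) (i : ι) : |f i| ≤ vnorm f := by
  rw [← Real.sqrt_sq_eq_abs]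
  exact Real.sqrt_le_sqrt (Finset.single_le_sum (fun j _ => sq_nonneg (f j)) (Finset.mem_univ i))

variable {P : ChartData m n} {φ σ : (Fin m → ℝ) → Fin n → ℝ}

lemma lap_smooth (hPdom : P.SmoothDomain) {f : (Fin m → ℝ) → ℝ}
    (hf : ContDiff ℝ (⊤ : ℕ∞) f) : ContDiff ℝ (⊤ : ℕ∞) (lap P f) := by
  unfold lap
  refine ContDiff.neg (ContDiff.sub ?_ ?_)
  · refine ContDiff.sum fun i _ => ContDiff.sum fun j _ => ?_
    exact (hPdom.1 i j).mul (contDiff_pd (by exact contDiff_pd hf))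
  · refine ContDiff.sum fun i _ => ContDiff.sum fun j _ => ContDiff.sum fun k _ => ?_
    exact ((hPdom.1 i j).mul (hPdom.2 k i j)).mul (contDiff_pd hf)

lemma dphi_smooth (hφ : ContDiff ℝ (⊤ : ℕ∞) φ) (i : Fin m) (β : Fin n) :
    ContDiff ℝ (⊤ : ℕ∞) (fun x => dphi φ x i β) :=
  contDiff_pd (contDiff_pi.mp hφ β)

lemma tension_smooth (hPdom : P.SmoothDomain) (hPtar : P.SmoothTarget)
    (hφ : ContDiff ℝ (⊤ : ℕ∞) φ) (α : Fin n) :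
    ContDiff ℝ (⊤ : ℕ∞) (fun x => tension P φ x α) := by
  unfold tension
  refine ContDiff.add (ContDiff.neg (lap_smooth hPdom (contDiff_pi.mp hφ α))) ?_
  refine ContDiff.sum fun i _ => ContDiff.sum fun j _ => ContDiff.sum fun ϑ _ =>
    ContDiff.sum fun β _ => ?_
  exact (((hPdom.1 i j).mul ((hPtar α ϑ β).comp hφ)).mul (dphi_smooth hφ i ϑ)).mul
    (dphi_smooth hφ j β)

lemma Scoef_smooth (hPtar : P.SmoothTarget) (α β ω ϑ : Fin n) :
    ContDiff ℝ (⊤ : ℕ∞) (fun y => Scoef P y α β ω ϑ) := by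
  unfold Scoef
  refine ContDiff.div_const ?_ 2
  refine ContDiff.add (ContDiff.add (ContDiff.add ?_ ?_) ?_) ?_
  · exact contDiff_pd (hPtar α β ϑ)
  · exact ContDiff.sum fun γ _ => (hPtar γ β ϑ).mul (hPtar α ω γ)
  · exact contDiff_pd (hPtar α ω ϑ)
  · exact ContDiff.sum fun γ _ => (hPtar γ ω ϑ).mul (hPtar α β γ)

lemma Rc_smooth (hPtar : P.SmoothTarget) (α δ β γ : Fin n) :
    ContDiff ℝ (⊤ : ℕ∞) (fun y => Rc P y α δ β γ) := by
  unfold Rc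
  refine ContDiff.add (ContDiff.sub (contDiff_pd (hPtar α γ δ)) (contDiff_pd (hPtar α β δ))) ?_
  exact ContDiff.sum fun μ _ => ((hPtar α β μ).mul (hPtar μ γ δ)).sub
    ((hPtar α γ μ).mul (hPtar μ β δ))

lemma Ecoef_smooth (hPtar : P.SmoothTarget) (α β δ ϑ η : Fin n) :
    ContDiff ℝ (⊤ : ℕ∞) (fun y => Ecoef P y α β δ ϑ η) := by
  unfold Ecoef
  exact ContDiff.sum fun γ _ => ((Rc_smooth hPtar α β γ δ).mul (hPtar γ ϑ η)).add
    ((Rc_smooth hPtar α β γ ϑ).mul (hPtar γ δ η))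

lemma Asec_smooth (hPdom : P.SmoothDomain) (hPtar : P.SmoothTarget)
    (hφ : ContDiff ℝ (⊤ : ℕ∞) φ) (hσ : ∀ α, ContDiff ℝ (⊤ : ℕ∞) (fun x => σ x α))
    (α : Fin n) : ContDiff ℝ (⊤ : ℕ∞) (fun x => Asec P φ σ x α) := by
  unfold Asec Aop
  refine ContDiff.add ?_ ?_
  · refine ContDiff.sum fun ϑ _ => ContDiff.sum fun i _ => ?_
    refine (contDiff_pd (hσ ϑ)).mul ?_
    refine contDiff_const.mul (ContDiff.sum fun j _ => ContDiff.sum fun β _ => ?_)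
    exact ((hPdom.1 i j).mul (dphi_smooth hφ j β)).mul ((hPtar α β ϑ).comp hφ)
  · refine ContDiff.sum fun ϑ _ => (hσ ϑ).mul (ContDiff.sub ?_ ?_)
    · exact ContDiff.sum fun β _ => (lap_smooth hPdom (contDiff_pi.mp hφ β)).mul
        ((hPtar α β ϑ).comp hφ)
    · refine ContDiff.sum fun i _ => ContDiff.sum fun j _ => ContDiff.sum fun β _ =>
        ContDiff.sum fun ω _ => ?_
      exact (((hPdom.1 i j).mul (dphi_smooth hφ j β)).mul (dphi_smooth hφ i ω)).mul
        ((Scoef_smooth hPtar α β ω ϑ).comp hφ)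

lemma uvar_smooth (hPdom : P.SmoothDomain) (hPtar : P.SmoothTarget)
    (hφ : ContDiff ℝ (⊤ : ℕ∞) φ) (j : ℕ) (α : Fin n) :
    ContDiff ℝ (⊤ : ℕ∞) (fun x => uvar P φ j x α) := by
  induction j generalizing α with
  | zero => exact tension_smooth hPdom hPtar hφ α
  | succ j ih =>
      show ContDiff ℝ (⊤ : ℕ∞) fun x =>
        lap P (fun z => uvar P φ j z α) x + Asec P φ (uvar P φ j) x α
      exact (lap_smooth hPdom (ih α)).add (Asec_smooth hPdom hPtar hφ ih α)

lemma vvar_smooth (hPdom : P.SmoothDomain) (hPtar : P.SmoothTarget)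
    (hφ : ContDiff ℝ (⊤ : ℕ∞) φ) (j : ℕ) (i : Fin m) (α : Fin n) :
    ContDiff ℝ (⊤ : ℕ∞) (fun x => vvar P φ j x i α) :=
  contDiff_pd (uvar_smooth hPdom hPtar hφ j α)

end Aux

section GG

variable {m n : ℕ}

def idx (k : ℕ) (hk : 2 ≤ k) (l : ℕ) : Fin (k-1) := ⟨min l (k-2), by omega⟩

def Gfun (P : ChartData m n) (k : ℕ) (hk : 2 ≤ k) (α : Fin n)
    (q : (Fin m → ℝ) × (Fin n → ℝ) × ((Fin m × Fin n) → ℝ) ×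
      (Fin (k-1) → Fin n → ℝ) × (Fin (k-1) → (Fin m × Fin n) → ℝ)) : ℝ :=
  (fun x y p U V =>
    -((∑ ϑ, ∑ i, V (idx k hk (k-2)) (i, ϑ) *
          (-2 * ∑ j, ∑ β, P.ginv x i j * p (j, β) * P.ΓN y α β ϑ))
        + ∑ ϑ, U (idx k hk (k-2)) ϑ *
            ((∑ β, ((∑ i, ∑ j, ∑ ϑ', ∑ β', P.ginv x i j * P.ΓN y β ϑ' β' * p (i, ϑ') * p (j, β'))
                - U (idx k hk 0) β) * P.ΓN y α β ϑ)
              - ∑ i, ∑ j, ∑ β, ∑ ω, P.ginv x i j * p (j, β) * p (i, ω) * Scoef P y α β ω ϑ))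
    - (∑ δ, ∑ γ, ∑ β, U (idx k hk (k-2)) δ *
        (∑ i, ∑ j, P.ginv x i j * p (i, γ) * p (j, β)) * Rc P y α β γ δ)
    + ∑ ℓ ∈ Finset.Icc 1 (k/2 - 1),
        ((∑ δ, ∑ γ, ∑ β, U (idx k hk (k/2 - ℓ - 1)) δ *
            (∑ i, ∑ j, P.ginv x i j * V (idx k hk (k/2 + ℓ - 2)) (i, γ) * p (j, β)) *
            Rc P y α β γ δ)
          + (∑ ϑ, ∑ δ, ∑ η, ∑ β, U (idx k hk (k/2 + ℓ - 2)) ϑ * U (idx k hk (k/2 - ℓ - 1)) δ *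
              (∑ i, ∑ j, P.ginv x i j * p (i, η) * p (j, β)) * Ecoef P y α β δ ϑ η)
          + ∑ δ, ∑ γ, ∑ β, U (idx k hk (k/2 + ℓ - 2)) δ *
              (∑ i, ∑ j, P.ginv x i j * V (idx k hk (k/2 - ℓ - 1)) (i, γ) * p (j, β)) *
              Rc P y α β γ δ))
    q.1 q.2.1 q.2.2.1 q.2.2.2.1 q.2.2.2.2

def dataOf (P : ChartData m n) (φ : (Fin m → ℝ) → Fin n → ℝ) (k : ℕ) (x : Fin m → ℝ) :
    (Fin n → ℝ) × ((Fin m × Fin n) → ℝ) ×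
      (Fin (k-1) → Fin n → ℝ) × (Fin (k-1) → (Fin m × Fin n) → ℝ) :=
  (φ x, fun pr => dphi φ x pr.1 pr.2, fun l β => uvar P φ l.1 x β,
    fun l pr => vvar P φ l.1 x pr.1 pr.2)

lemma FkEven_eq_Gfun (P : ChartData m n) (φ : (Fin m → ℝ) → Fin n → ℝ)
    (k : ℕ) (hk : 4 ≤ k) (hke : Even k) (hk2 : 2 ≤ k) (x : Fin m → ℝ) (α : Fin n) :
    FkEven P φ k x α = Gfun P k hk2 α (x, dataOf P φ k x) := by
  have hklow : 2 ≤ k / 2 := by omega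
  have hlap : ∀ β, ((∑ i, ∑ j, ∑ ϑ', ∑ β',
      P.ginv x i j * P.ΓN (φ x) β ϑ' β' * dphi φ x i ϑ' * dphi φ x j β')
        - uvar P φ 0 x β) = lap P (fun z => φ z β) x := by
    intro β
    have : uvar P φ 0 x β = tension P φ x β := rfl
    rw [this]; unfold tension; ring
  simp only [Gfun, dataOf, idx, Nat.min_self, Nat.zero_min, hlap]
  unfold FkEven Asec Aop dpair vpair vvar
  congr 1
  refine Finset.sum_congr rfl fun ℓ hℓ => ?_
  rw [Finset.mem_Icc] at hℓ
  have h1 : min (k/2 + ℓ - 2) (k-2) = k/2 + ℓ - 2 := by omega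
  have h2 : min (k/2 - ℓ - 1) (k-2) = k/2 - ℓ - 1 := by omega
  rw [h1, h2]

end GG

section GS

variable {m n : ℕ}

lemma Gfun_smooth (P : ChartData m n) (hPdom : P.SmoothDomain) (hPtar : P.SmoothTarget)
    (k : ℕ) (hk : 2 ≤ k) (α : Fin n) :
    ContDiff ℝ (⊤ : ℕ∞) (Gfun P k hk α) := by
  have hx : ContDiff ℝ (⊤ : ℕ∞) (fun q : (Fin m → ℝ) × (Fin n → ℝ) × ((Fin m × Fin n) → ℝ) ×
      (Fin (k-1) → Fin n → ℝ) × (Fin (k-1) → (Fin m × Fin n) → ℝ) => q.1) := contDiff_fst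
  have hy : ContDiff ℝ (⊤ : ℕ∞) (fun q : (Fin m → ℝ) × (Fin n → ℝ) × ((Fin m × Fin n) → ℝ) ×
      (Fin (k-1) → Fin n → ℝ) × (Fin (k-1) → (Fin m × Fin n) → ℝ) => q.2.1) :=
    contDiff_fst.comp contDiff_snd
  have hp : ∀ pr : Fin m × Fin n, ContDiff ℝ (⊤ : ℕ∞)
      (fun q : (Fin m → ℝ) × (Fin n → ℝ) × ((Fin m × Fin n) → ℝ) ×
        (Fin (k-1) → Fin n → ℝ) × (Fin (k-1) → (Fin m × Fin n) → ℝ) => q.2.2.1 pr) :=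
    fun pr => contDiff_pi.mp (contDiff_fst.comp (contDiff_snd.comp contDiff_snd)) pr
  have hU : ∀ (l : Fin (k-1)) (β : Fin n), ContDiff ℝ (⊤ : ℕ∞)
      (fun q : (Fin m → ℝ) × (Fin n → ℝ) × ((Fin m × Fin n) → ℝ) ×
        (Fin (k-1) → Fin n → ℝ) × (Fin (k-1) → (Fin m × Fin n) → ℝ) => q.2.2.2.1 l β) :=
    fun l β => contDiff_pi.mp (contDiff_pi.mp
      (contDiff_fst.comp (contDiff_snd.comp (contDiff_snd.comp contDiff_snd))) l) β
  have hV : ∀ (l : Fin (k-1)) (pr : Fin m × Fin n), ContDiff ℝ (⊤ : ℕ∞)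
      (fun q : (Fin m → ℝ) × (Fin n → ℝ) × ((Fin m × Fin n) → ℝ) ×
        (Fin (k-1) → Fin n → ℝ) × (Fin (k-1) → (Fin m × Fin n) → ℝ) => q.2.2.2.2 l pr) :=
    fun l pr => contDiff_pi.mp (contDiff_pi.mp
      (contDiff_snd.comp (contDiff_snd.comp (contDiff_snd.comp contDiff_snd))) l) pr
  have hg : ∀ i j, ContDiff ℝ (⊤ : ℕ∞)
      (fun q : (Fin m → ℝ) × (Fin n → ℝ) × ((Fin m × Fin n) → ℝ) ×
        (Fin (k-1) → Fin n → ℝ) × (Fin (k-1) → (Fin m × Fin n) → ℝ) => P.ginv q.1 i j) :=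
    fun i j => (hPdom.1 i j).comp hx
  have hΓ : ∀ a b c, ContDiff ℝ (⊤ : ℕ∞)
      (fun q : (Fin m → ℝ) × (Fin n → ℝ) × ((Fin m × Fin n) → ℝ) ×
        (Fin (k-1) → Fin n → ℝ) × (Fin (k-1) → (Fin m × Fin n) → ℝ) => P.ΓN q.2.1 a b c) :=
    fun a b c => (hPtar a b c).comp hy
  have hR : ∀ a b c d, ContDiff ℝ (⊤ : ℕ∞)
      (fun q : (Fin m → ℝ) × (Fin n → ℝ) × ((Fin m × Fin n) → ℝ) ×
        (Fin (k-1) → Fin n → ℝ) × (Fin (k-1) → (Fin m × Fin n) → ℝ) => Rc P q.2.1 a b c d) :=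
    fun a b c d => (Rc_smooth hPtar a b c d).comp hy
  have hS : ∀ a b c d, ContDiff ℝ (⊤ : ℕ∞)
      (fun q : (Fin m → ℝ) × (Fin n → ℝ) × ((Fin m × Fin n) → ℝ) ×
        (Fin (k-1) → Fin n → ℝ) × (Fin (k-1) → (Fin m × Fin n) → ℝ) => Scoef P q.2.1 a b c d) :=
    fun a b c d => (Scoef_smooth hPtar a b c d).comp hy
  have hE : ∀ a b c d e, ContDiff ℝ (⊤ : ℕ∞)
      (fun q : (Fin m → ℝ) × (Fin n → ℝ) × ((Fin m × Fin n) → ℝ) ×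
        (Fin (k-1) → Fin n → ℝ) × (Fin (k-1) → (Fin m × Fin n) → ℝ) => Ecoef P q.2.1 a b c d e) :=
    fun a b c d e => (Ecoef_smooth hPtar a b c d e).comp hy
  unfold Gfun
  refine ContDiff.add (ContDiff.sub (ContDiff.neg (ContDiff.add ?_ ?_)) ?_) ?_
  · refine ContDiff.sum fun ϑ _ => ContDiff.sum fun i _ => (hV _ _).mul
      (contDiff_const.mul (ContDiff.sum fun j _ => ContDiff.sum fun β _ => ?_))
    exact ((hg i j).mul (hp _)).mul (hΓ α β ϑ)
  · refine ContDiff.sum fun ϑ _ => (hU _ _).mul (ContDiff.sub ?_ ?_)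
    · refine ContDiff.sum fun β _ => ContDiff.mul (ContDiff.sub ?_ (hU _ _)) (hΓ α β ϑ)
      refine ContDiff.sum fun i _ => ContDiff.sum fun j _ => ContDiff.sum fun ϑ' _ =>
        ContDiff.sum fun β' _ => ?_
      exact (((hg i j).mul (hΓ β ϑ' β')).mul (hp _)).mul (hp _)
    · refine ContDiff.sum fun i _ => ContDiff.sum fun j _ => ContDiff.sum fun β _ =>
        ContDiff.sum fun ω _ => ?_
      exact (((hg i j).mul (hp _)).mul (hp _)).mul (hS α β ω ϑ)
  · refine ContDiff.sum fun δ _ => ContDiff.sum fun γ _ => ContDiff.sum fun β _ => ?_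
    refine ((hU _ _).mul (ContDiff.sum fun i _ => ContDiff.sum fun j _ => ?_)).mul (hR α β γ δ)
    exact ((hg i j).mul (hp _)).mul (hp _)
  · refine ContDiff.sum fun ℓ _ => ContDiff.add (ContDiff.add ?_ ?_) ?_
    · refine ContDiff.sum fun δ _ => ContDiff.sum fun γ _ => ContDiff.sum fun β _ => ?_
      refine ((hU _ _).mul (ContDiff.sum fun i _ => ContDiff.sum fun j _ => ?_)).mul (hR α β γ δ)
      exact ((hg i j).mul (hV _ _)).mul (hp _)
    · refine ContDiff.sum fun ϑ _ => ContDiff.sum fun δ _ => ContDiff.sum fun η _ =>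
        ContDiff.sum fun β _ => ?_
      refine (((hU _ _).mul (hU _ _)).mul
        (ContDiff.sum fun i _ => ContDiff.sum fun j _ => ?_)).mul (hE α β δ ϑ η)
      exact ((hg i j).mul (hp _)).mul (hp _)
    · refine ContDiff.sum fun δ _ => ContDiff.sum fun γ _ => ContDiff.sum fun β _ => ?_
      refine ((hU _ _).mul (ContDiff.sum fun i _ => ContDiff.sum fun j _ => ?_)).mul (hR α β γ δ)
      exact ((hg i j).mul (hV _ _)).mul (hp _)

end GS


/-- (Lemma 2.7 of the paper.)
Let `φ, φ̃ : M → N` be two polyharmonic maps of even order `k = 2s ≥ 4` with local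
right-hand sides `F^k` and `F̃^k`. Then on any open set `D` with compact closure
contained in the chart domain `U` there exists `C > 0` with
`|(F^k)^α - (F̃^k)^α| ≤ C( |φ-φ̃| + |dφ-dφ̃| + Σ_{ℓ=0}^{k-2}|u_ℓ-ũ_ℓ|
  + Σ_{ℓ=0}^{k-3}|v_ℓ-ṽ_ℓ| + |∇u_{k-2}-∇ũ_{k-2}| )`. -/
theorem estimate_Fk_difference
    {m n : ℕ} (P : ChartData m n)
    (hPdom : P.SmoothDomain) (hPtar : P.SmoothTarget) (hPriem : P.Riemannian)
    (U : Set (Fin m → ℝ)) (hUopen : IsOpen U)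
    (φ ψ : (Fin m → ℝ) → Fin n → ℝ)
    (hφ : ContDiff ℝ (⊤ : ℕ∞) φ) (hψ : ContDiff ℝ (⊤ : ℕ∞) ψ)
    (k : ℕ) (hk : 4 ≤ k) (hkeven : Even k)
    (hpolyφ : ∀ (x : Fin m → ℝ) (α : Fin n), tauK P φ k x α = 0)
    (hpolyψ : ∀ (x : Fin m → ℝ) (α : Fin n), tauK P ψ k x α = 0)
    (D : Set (Fin m → ℝ)) (hDopen : IsOpen D) (hDcpt : IsCompact (closure D))
    (hDsub : closure D ⊆ U) :
    ∃ C > 0, ∀ x ∈ D, ∀ α : Fin n,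
      |FkEven P φ k x α - FkEven P ψ k x α|
        ≤ C * (vnorm (fun α : Fin n => φ x α - ψ x α)
          + vnorm (fun p : Fin m × Fin n => dphi φ x p.1 p.2 - dphi ψ x p.1 p.2)
          + (∑ l ∈ Finset.range (k-1),
              vnorm (fun α : Fin n => uvar P φ l x α - uvar P ψ l x α))
          + (∑ l ∈ Finset.range (k-2),
              vnorm (fun p : Fin m × Fin n => vvar P φ l x p.1 p.2 - vvar P ψ l x p.1 p.2))
          + vnorm (fun p : Fin m × Fin n =>
              vvar P φ (k-2) x p.1 p.2 - vvar P ψ (k-2) x p.1 p.2)) := by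
  have hk2 : 2 ≤ k := by omega
  have hdata : ∀ (χ : (Fin m → ℝ) → Fin n → ℝ), ContDiff ℝ (⊤ : ℕ∞) χ →
      Continuous (fun x => dataOf P χ k x) := by
    intro χ hχ
    refine Continuous.prodMk hχ.continuous (Continuous.prodMk ?_ (Continuous.prodMk ?_ ?_))
    · exact continuous_pi fun pr => (dphi_smooth hχ pr.1 pr.2).continuous
    · exact continuous_pi fun l => continuous_pi fun β =>
        (uvar_smooth hPdom hPtar hχ l.1 β).continuous
    · exact continuous_pi fun l => continuous_pi fun pr =>
        (vvar_smooth hPdom hPtar hχ l.1 pr.1 pr.2).continuous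
  obtain ⟨R1, hR1⟩ := hDcpt.exists_bound_of_continuousOn ((hdata φ hφ).continuousOn)
  obtain ⟨R2, hR2⟩ := hDcpt.exists_bound_of_continuousOn ((hdata ψ hψ).continuousOn)
  set R : ℝ := max (max R1 R2) 0 with hRdef
  set S := closure D ×ˢ Metric.closedBall
    (0 : (Fin n → ℝ) × ((Fin m × Fin n) → ℝ) ×
      (Fin (k-1) → Fin n → ℝ) × (Fin (k-1) → (Fin m × Fin n) → ℝ)) R with hSdef
  have hScpt : IsCompact S := hDcpt.prod (isCompact_closedBall _ _)
  have hGd : ∀ α : Fin n, Continuous (fderiv ℝ (Gfun P k hk2 α)) := fun α =>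
    ((Gfun_smooth P hPdom hPtar k hk2 α).fderiv_right (m := 0) (by exact_mod_cast le_top)).continuous
  choose Cf hCf using fun α : Fin n =>
    hScpt.exists_bound_of_continuousOn (hGd α).continuousOn
  set C0 : ℝ := ∑ α : Fin n, max (Cf α) 0 with hC0def
  have hC0nonneg : 0 ≤ C0 := Finset.sum_nonneg fun α _ => le_max_right _ _
  have hCfC0 : ∀ α, Cf α ≤ C0 := fun α =>
    le_trans (le_max_left _ _) (Finset.single_le_sum (f := fun α => max (Cf α) 0)
      (fun β _ => le_max_right _ _) (Finset.mem_univ α))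
  refine ⟨C0 + 1, by positivity, fun x hx α => ?_⟩
  set Ssum : ℝ := vnorm (fun α : Fin n => φ x α - ψ x α)
          + vnorm (fun p : Fin m × Fin n => dphi φ x p.1 p.2 - dphi ψ x p.1 p.2)
          + (∑ l ∈ Finset.range (k-1),
              vnorm (fun α : Fin n => uvar P φ l x α - uvar P ψ l x α))
          + (∑ l ∈ Finset.range (k-2),
              vnorm (fun p : Fin m × Fin n => vvar P φ l x p.1 p.2 - vvar P ψ l x p.1 p.2))
          + vnorm (fun p : Fin m × Fin n =>
              vvar P φ (k-2) x p.1 p.2 - vvar P ψ (k-2) x p.1 p.2) with hSsum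
  have hxcl : x ∈ closure D := subset_closure hx
  have hvn1 : (0:ℝ) ≤ vnorm (fun α : Fin n => φ x α - ψ x α) := vnorm_nonneg _
  have hvn2 : (0:ℝ) ≤ vnorm (fun p : Fin m × Fin n => dphi φ x p.1 p.2 - dphi ψ x p.1 p.2) :=
    vnorm_nonneg _
  have hvn3 : (0:ℝ) ≤ ∑ l ∈ Finset.range (k-1),
      vnorm (fun α : Fin n => uvar P φ l x α - uvar P ψ l x α) :=
    Finset.sum_nonneg fun _ _ => vnorm_nonneg _
  have hvn4 : (0:ℝ) ≤ ∑ l ∈ Finset.range (k-2),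
      vnorm (fun p : Fin m × Fin n => vvar P φ l x p.1 p.2 - vvar P ψ l x p.1 p.2) :=
    Finset.sum_nonneg fun _ _ => vnorm_nonneg _
  have hvn5 : (0:ℝ) ≤ vnorm (fun p : Fin m × Fin n =>
      vvar P φ (k-2) x p.1 p.2 - vvar P ψ (k-2) x p.1 p.2) := vnorm_nonneg _
  have hSsumnn : 0 ≤ Ssum := by rw [hSsum]; linarith
  set a := (x, dataOf P φ k x) with hadef
  set b := (x, dataOf P ψ k x) with hbdef
  have haB : dataOf P φ k x ∈ Metric.closedBall
      (0 : (Fin n → ℝ) × ((Fin m × Fin n) → ℝ) ×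
        (Fin (k-1) → Fin n → ℝ) × (Fin (k-1) → (Fin m × Fin n) → ℝ)) R := by
    rw [mem_closedBall_zero_iff]
    exact le_trans (hR1 x hxcl) (le_trans (le_max_left _ _) (le_max_left _ _))
  have hbB : dataOf P ψ k x ∈ Metric.closedBall
      (0 : (Fin n → ℝ) × ((Fin m × Fin n) → ℝ) ×
        (Fin (k-1) → Fin n → ℝ) × (Fin (k-1) → (Fin m × Fin n) → ℝ)) R := by
    rw [mem_closedBall_zero_iff]
    exact le_trans (hR2 x hxcl) (le_trans (le_max_right _ _) (le_max_left _ _))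
  set T : Set ((Fin m → ℝ) × (Fin n → ℝ) × ((Fin m × Fin n) → ℝ) ×
      (Fin (k-1) → Fin n → ℝ) × (Fin (k-1) → (Fin m × Fin n) → ℝ)) :=
    {x} ×ˢ Metric.closedBall 0 R with hTdef
  have hTS : T ⊆ S := Set.prod_mono (by simpa using hxcl) le_rfl
  have hTconv : Convex ℝ T := (convex_singleton x).prod (convex_closedBall _ _)
  have hMVT : ‖Gfun P k hk2 α b - Gfun P k hk2 α a‖ ≤ C0 * ‖b - a‖ := by
    refine hTconv.norm_image_sub_le_of_norm_fderiv_le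
      (fun q _ => ((Gfun_smooth P hPdom hPtar k hk2 α).differentiable (by simp)).differentiableAt)
      (fun q hq => le_trans (hCf α q (hTS hq)) (hCfC0 α))
      (Set.mk_mem_prod rfl haB) (Set.mk_mem_prod rfl hbB)
  have hnorm : ‖b - a‖ ≤ Ssum := by
    have hsub : b - a = ((0 : Fin m → ℝ), dataOf P ψ k x - dataOf P φ k x) := by
      rw [hadef, hbdef, Prod.mk_sub_mk, sub_self]
    rw [hsub, Prod.norm_def, norm_zero]
    refine max_le hSsumnn ?_
    have h1 : ‖ψ x - φ x‖ ≤ Ssum := by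
      refine le_trans ((pi_norm_le_iff_of_nonneg hvn1).mpr fun i => ?_) (by rw [hSsum]; linarith)
      rw [Pi.sub_apply, Real.norm_eq_abs, abs_sub_comm]
      exact abs_le_vnorm (fun α : Fin n => φ x α - ψ x α) i
    have h2 : ‖(fun pr : Fin m × Fin n => dphi ψ x pr.1 pr.2)
        - (fun pr : Fin m × Fin n => dphi φ x pr.1 pr.2)‖ ≤ Ssum := by
      refine le_trans ((pi_norm_le_iff_of_nonneg hvn2).mpr fun pr => ?_) (by rw [hSsum]; linarith)
      rw [Pi.sub_apply, Real.norm_eq_abs, abs_sub_comm]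
      exact abs_le_vnorm (fun p : Fin m × Fin n => dphi φ x p.1 p.2 - dphi ψ x p.1 p.2) pr
    have h3 : ‖(fun (l : Fin (k-1)) (β : Fin n) => uvar P ψ l.1 x β)
        - (fun (l : Fin (k-1)) (β : Fin n) => uvar P φ l.1 x β)‖ ≤ Ssum := by
      refine le_trans ((pi_norm_le_iff_of_nonneg hvn3).mpr fun l => ?_) (by rw [hSsum]; linarith)
      rw [Pi.sub_apply]
      have hl : ‖(fun β => uvar P ψ l.1 x β) - (fun β => uvar P φ l.1 x β)‖
          ≤ vnorm (fun β : Fin n => uvar P φ l.1 x β - uvar P ψ l.1 x β) := by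
        refine (pi_norm_le_iff_of_nonneg (vnorm_nonneg _)).mpr fun β => ?_
        rw [Pi.sub_apply, Real.norm_eq_abs, abs_sub_comm]
        exact abs_le_vnorm (fun β : Fin n => uvar P φ l.1 x β - uvar P ψ l.1 x β) β
      exact le_trans hl (Finset.single_le_sum
        (f := fun l => vnorm (fun β : Fin n => uvar P φ l x β - uvar P ψ l x β))
        (fun _ _ => vnorm_nonneg _) (Finset.mem_range.mpr l.2))
    have h4 : ‖(fun (l : Fin (k-1)) (pr : Fin m × Fin n) => vvar P ψ l.1 x pr.1 pr.2)
        - (fun (l : Fin (k-1)) (pr : Fin m × Fin n) => vvar P φ l.1 x pr.1 pr.2)‖ ≤ Ssum := by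
      refine (pi_norm_le_iff_of_nonneg hSsumnn).mpr fun l => ?_
      rw [Pi.sub_apply]
      have hl : ∀ l' : ℕ, ‖(fun pr : Fin m × Fin n => vvar P ψ l' x pr.1 pr.2)
            - (fun pr : Fin m × Fin n => vvar P φ l' x pr.1 pr.2)‖
          ≤ vnorm (fun pr : Fin m × Fin n =>
              vvar P φ l' x pr.1 pr.2 - vvar P ψ l' x pr.1 pr.2) := by
        intro l'
        refine (pi_norm_le_iff_of_nonneg (vnorm_nonneg _)).mpr fun pr => ?_
        rw [Pi.sub_apply, Real.norm_eq_abs, abs_sub_comm]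
        exact abs_le_vnorm (fun pr : Fin m × Fin n =>
          vvar P φ l' x pr.1 pr.2 - vvar P ψ l' x pr.1 pr.2) pr
      by_cases hc : l.1 = k - 2
      · simp only [hc]
        refine le_trans (hl (k-2)) ?_
        rw [hSsum]; linarith
      · have hlt : l.1 < k - 2 := by have := l.2; omega
        have hmem := Finset.single_le_sum (f := fun l' => vnorm (fun pr : Fin m × Fin n =>
            vvar P φ l' x pr.1 pr.2 - vvar P ψ l' x pr.1 pr.2))
          (fun _ _ => vnorm_nonneg _) (Finset.mem_range.mpr hlt)
        refine le_trans (hl l.1) (le_trans hmem ?_)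
        rw [hSsum]; linarith
    rw [dataOf, dataOf, Prod.mk_sub_mk, Prod.norm_def, Prod.mk_sub_mk, Prod.norm_def,
      Prod.mk_sub_mk, Prod.norm_def]
    exact max_le h1 (max_le h2 (max_le h3 h4))
  calc |FkEven P φ k x α - FkEven P ψ k x α|
      = ‖Gfun P k hk2 α b - Gfun P k hk2 α a‖ := by
        rw [FkEven_eq_Gfun P φ k hk hkeven hk2 x α, FkEven_eq_Gfun P ψ k hk hkeven hk2 x α,
          Real.norm_eq_abs, abs_sub_comm]
    _ ≤ C0 * ‖b - a‖ := hMVT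
    _ ≤ C0 * Ssum := mul_le_mul_of_nonneg_left hnorm hC0nonneg
    _ ≤ (C0 + 1) * Ssum := mul_le_mul_of_nonneg_right (by linarith) hSsumnn


end Polyharm
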